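/- Forward Euler stability (Theorem 3.4(3)): For R(z) = 1 + z, the Galerkin forward Euler–Maruyama scheme is asymptotically mean-square stable if ( max{|1 − Δt λ_{h,1}|, |1 − Δt λ_{h,N_h}|} + Δt ‖F‖_{L(H)} )² + Δt Tr(Q) ‖G‖²_{L(H;L(U;H))} < 1. -/

import Mathlib

open MeasureTheory Filter
open scoped Kronecker RealInnerProductSpace

noncomputable section

/-- A solution process of the linear recursion `X^{j+1} = (D + E^j) X^j` with
`F_0`-measurable square-integrable initial value (all iterates square-integrable, so that
all tensor expectations exist). -/
def IsSolution {Ω : Type*} {m0 : MeasurableSpace Ω} (μ : MeasureTheory.Measure Ω)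
    (ℱ : MeasureTheory.Filtration ℕ m0) {N : ℕ}
    (D : Matrix (Fin N) (Fin N) ℝ) (E : ℕ → Ω → Matrix (Fin N) (Fin N) ℝ)
    (X : ℕ → Ω → Fin N → ℝ) : Prop :=
  (∀ j ω, X (j + 1) ω = (D + E j ω).mulVec (X j ω))
    ∧ (∀ k, StronglyMeasurable[ℱ 0] fun ω => X 0 ω k)
    ∧ (∀ j k, MeasureTheory.MemLp (fun ω => X j ω k) 2 μ)

/-- The mean-square (second moment) `E[‖X^j‖²]` of a solution process. -/
noncomputable def secondMoment {Ω : Type*} {m0 : MeasurableSpace Ω}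
    (μ : MeasureTheory.Measure Ω) {N : ℕ} (X : ℕ → Ω → Fin N → ℝ) (j : ℕ) : ℝ :=
  ∫ ω, ∑ k, (X j ω k) ^ 2 ∂μ

/-- Mean-square stability of the zero solution of the recursion `X^{j+1} = (D + E^j)X^j`. -/
def MeanSquareStable {Ω : Type*} {m0 : MeasurableSpace Ω} (μ : MeasureTheory.Measure Ω)
    (ℱ : MeasureTheory.Filtration ℕ m0) {N : ℕ}
    (D : Matrix (Fin N) (Fin N) ℝ) (E : ℕ → Ω → Matrix (Fin N) (Fin N) ℝ) : Prop :=
  ∀ ε > (0 : ℝ), ∃ δ > (0 : ℝ), ∀ X : ℕ → Ω → Fin N → ℝ,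
    IsSolution μ ℱ D E X → secondMoment μ X 0 < δ → ∀ j, secondMoment μ X j < ε

/-- Asymptotic mean-square stability of the zero solution: mean-square stability together with
the existence of `δ > 0` such that `E[‖X^0‖²] < δ` implies `E[‖X^j‖²] → 0`. -/
def AsympMeanSquareStable {Ω : Type*} {m0 : MeasurableSpace Ω} (μ : MeasureTheory.Measure Ω)
    (ℱ : MeasureTheory.Filtration ℕ m0) {N : ℕ}
    (D : Matrix (Fin N) (Fin N) ℝ) (E : ℕ → Ω → Matrix (Fin N) (Fin N) ℝ) : Prop :=
  MeanSquareStable μ ℱ D E ∧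
    ∃ δ > (0 : ℝ), ∀ X : ℕ → Ω → Fin N → ℝ,
      IsSolution μ ℱ D E X → secondMoment μ X 0 < δ →
        Filter.Tendsto (secondMoment μ X) Filter.atTop (nhds 0)

private lemma euclid_norm_sq {n : ℕ} (z : Fin n → ℝ) :
    ‖((WithLp.equiv 2 (Fin n → ℝ)).symm z)‖ ^ 2 = ∑ k, (z k) ^ 2 := by
  rw [EuclideanSpace.norm_eq, Real.sq_sqrt (by positivity)]
  simp [WithLp.equiv_symm_apply, sq_abs]

private lemma sum_sq_mulVec_le {n : ℕ} (M : Matrix (Fin n) (Fin n) ℝ) {C : ℝ}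
    (hC : ‖Matrix.toEuclideanCLM (𝕜 := ℝ) M‖ ≤ C) (x : Fin n → ℝ) :
    ∑ k, (M.mulVec x k) ^ 2 ≤ C ^ 2 * ∑ k, (x k) ^ 2 := by
  have happ : Matrix.toEuclideanCLM (𝕜 := ℝ) M ((WithLp.equiv 2 (Fin n → ℝ)).symm x)
      = (WithLp.equiv 2 (Fin n → ℝ)).symm (M.mulVec x) :=
    Matrix.toEuclideanCLM_toLp M x
  have hle : ‖(WithLp.equiv 2 (Fin n → ℝ)).symm (M.mulVec x)‖
      ≤ C * ‖(WithLp.equiv 2 (Fin n → ℝ)).symm x‖ := by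
    rw [← happ]
    exact le_trans (ContinuousLinearMap.le_opNorm _ _)
      (mul_le_mul_of_nonneg_right hC (norm_nonneg _))
  calc ∑ k, (M.mulVec x k) ^ 2 = ‖(WithLp.equiv 2 (Fin n → ℝ)).symm (M.mulVec x)‖ ^ 2 :=
        (euclid_norm_sq _).symm
    _ ≤ (C * ‖(WithLp.equiv 2 (Fin n → ℝ)).symm x‖) ^ 2 := by
        apply pow_le_pow_left₀ (norm_nonneg _) hle
    _ = C ^ 2 * ∑ k, (x k) ^ 2 := by rw [mul_pow, euclid_norm_sq]

private lemma integrable_mul_L2 {Ω : Type*} {m0 : MeasurableSpace Ω} {μ : Measure Ω}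
    {f g : Ω → ℝ} (hf : MemLp f 2 μ) (hg : MemLp g 2 μ) :
    Integrable (fun ω => f ω * g ω) μ := by
  refine Integrable.mono' (((hf.integrable_sq.add hg.integrable_sq)).div_const 2)
    (hf.aestronglyMeasurable.mul hg.aestronglyMeasurable) ?_
  filter_upwards with ω
  rw [Real.norm_eq_abs, abs_mul]
  simp only [Pi.add_apply]
  nlinarith [sq_nonneg (|f ω| - |g ω|), sq_abs (f ω), sq_abs (g ω), abs_nonneg (f ω), abs_nonneg (g ω)]

/-- abs bound from square bound -/
private lemma abs_le_of_sq_le {u C : ℝ} (hC : 0 ≤ C) (h : u ^ 2 ≤ C ^ 2) : |u| ≤ C := by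
  calc |u| = Real.sqrt (u ^ 2) := (Real.sqrt_sq_eq_abs u).symm
    _ ≤ Real.sqrt (C ^ 2) := Real.sqrt_le_sqrt h
    _ = C := Real.sqrt_sq hC

private lemma moment_step {Ω : Type*} {m0 : MeasurableSpace Ω} (μ : Measure Ω)
    [IsProbabilityMeasure μ] (ℱ : Filtration ℕ m0) {n : ℕ} (j : ℕ)
    (x x' : Ω → Fin n → ℝ)
    (D : Matrix (Fin n) (Fin n) ℝ) {c : ℝ} (hc0 : 0 ≤ c)
    (hD : ‖Matrix.toEuclideanCLM (𝕜 := ℝ) D‖ ≤ c)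
    (Z : Fin n → Fin n → Ω → ℝ)
    (hZL2 : ∀ a b, MemLp (Z a b) 2 μ)
    (hZmean : ∀ a b, μ[Z a b | ℱ j] =ᵐ[μ] 0)
    (κ : Fin n → Fin n → Fin n → ℝ)
    (hZcov : ∀ a b b', μ[fun ω => Z a b ω * Z a b' ω | ℱ j] =ᵐ[μ] fun _ => κ a b b')
    {β : ℝ} (hβ0 : 0 ≤ β)
    (hκ : ∀ y : Fin n → ℝ, ∑ a, ∑ b, ∑ b', κ a b b' * (y b * y b') ≤ β * ∑ b, (y b) ^ 2)
    (hxmeas : ∀ b, StronglyMeasurable[ℱ j] (fun ω => x ω b))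
    (hxL2 : ∀ b, MemLp (fun ω => x ω b) 2 μ)
    (hx'L2 : ∀ b, MemLp (fun ω => x' ω b) 2 μ)
    (hrec : ∀ ω, x' ω = D.mulVec (x ω) + (fun a => ∑ b, Z a b ω * x ω b)) :
    ∫ ω, ∑ k, (x' ω k) ^ 2 ∂μ ≤ (c ^ 2 + β) * ∫ ω, ∑ k, (x ω k) ^ 2 ∂μ := by
  classical
  set Y : Fin n → Ω → ℝ := fun a ω => ∑ b, Z a b ω * x ω b with hY
  set Dx : Fin n → Ω → ℝ := fun a ω => D.mulVec (x ω) a with hDx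
  have hDxsum : ∀ a, Dx a = fun ω => ∑ b, D a b * x ω b := by
    intro a; funext ω; simp [hDx, Matrix.mulVec, dotProduct]
  have hDxL2 : ∀ a, MemLp (Dx a) 2 μ := by
    intro a; rw [hDxsum a]
    exact memLp_finsetSum _ (fun b _ => ((hxL2 b).const_mul (D a b)))
  have hDxmeas : ∀ a, StronglyMeasurable[ℱ j] (Dx a) := by
    intro a; rw [hDxsum a]
    exact Finset.stronglyMeasurable_fun_sum _ (fun b _ => (stronglyMeasurable_const.mul (hxmeas b)))
  have hYL2 : ∀ a, MemLp (Y a) 2 μ := by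
    intro a
    have : Y a = fun ω => x' ω a - Dx a ω := by
      funext ω; rw [hrec ω]; simp [hY, hDx]
    rw [this]
    exact (hx'L2 a).sub (hDxL2 a)
  -- the truncation sets
  set g : Ω → ℝ := fun ω => ∑ b, (x ω b) ^ 2 with hg
  have hgmeas : StronglyMeasurable[ℱ j] g :=
    Finset.stronglyMeasurable_fun_sum _ (fun b _ => by
      simpa [sq] using ((hxmeas b).fun_mul (hxmeas b)))
  set S : ℕ → Set Ω := fun M => {ω | g ω ≤ (M : ℝ)} with hS
  have hSmeas : ∀ M, MeasurableSet[ℱ j] (S M) :=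
    fun M => measurableSet_le hgmeas.measurable measurable_const
  have hSmeas0 : ∀ M, MeasurableSet (S M) := fun M => (ℱ.le j) _ (hSmeas M)
  have hmem : ∀ ω, ∀ᶠ M in atTop, ω ∈ S M := by
    intro ω
    rw [eventually_atTop]
    exact ⟨⌈g ω⌉₊, fun M hM => le_trans (Nat.le_ceil _) (Nat.cast_le.mpr hM)⟩
  have hgnonneg : ∀ ω, 0 ≤ g ω := fun ω => Finset.sum_nonneg fun b _ => sq_nonneg _
  -- bounds on truncated products
  have hbddx : ∀ M b ω, ω ∈ S M → (x ω b) ^ 2 ≤ (M : ℝ) := by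
    intro M b ω hω
    exact le_trans (Finset.single_le_sum (f := fun b => (x ω b)^2)
      (fun i _ => sq_nonneg _) (Finset.mem_univ b)) hω
  have hbddDx : ∀ M a ω, ω ∈ S M → (Dx a ω) ^ 2 ≤ c ^ 2 * (M : ℝ) := by
    intro M a ω hω
    refine le_trans (Finset.single_le_sum (f := fun k => (D.mulVec (x ω) k)^2)
      (fun i _ => sq_nonneg _) (Finset.mem_univ a)) ?_
    refine le_trans (sum_sq_mulVec_le D hD (x ω)) ?_
    exact mul_le_mul_of_nonneg_left hω (by positivity)
  -- generic: truncated bounded ℱ j-measurable factor against integrable W with constant condexp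
  have hbase : ∀ (φ : Ω → ℝ) (Cf : ℝ), StronglyMeasurable[ℱ j] φ → (∀ ω, ‖φ ω‖ ≤ Cf) →
      ∀ (W : Ω → ℝ) (k : ℝ), Integrable W μ → (μ[W | ℱ j] =ᵐ[μ] fun _ => k) →
      ∫ ω, φ ω * W ω ∂μ = k * ∫ ω, φ ω ∂μ := by
    intro φ Cf hφmeas hφbdd W k hWint hWcond
    have hφae : AEStronglyMeasurable φ μ := (hφmeas.mono (ℱ.le j)).aestronglyMeasurable
    have hφW : Integrable (fun ω => φ ω * W ω) μ := hWint.bdd_mul hφae (Filter.Eventually.of_forall hφbdd)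
    have h1 : μ[fun ω => φ ω * W ω | ℱ j] =ᵐ[μ] fun ω => φ ω * k := by
      refine (condExp_mul_of_stronglyMeasurable_left hφmeas hφW hWint).trans ?_
      filter_upwards [hWcond] with ω hω
      simp only [Pi.mul_apply, hω]
    calc ∫ ω, φ ω * W ω ∂μ = ∫ ω, (μ[fun ω => φ ω * W ω | ℱ j]) ω ∂μ :=
          (integral_condExp (ℱ.le j)).symm
      _ = ∫ ω, φ ω * k ∂μ := integral_congr_ae h1
      _ = k * ∫ ω, φ ω ∂μ := by rw [integral_mul_const, mul_comm]
  -- integrability of key functions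
  have hcrossInt : Integrable (fun ω => ∑ a, Dx a ω * Y a ω) μ :=
    integrable_finset_sum _ (fun a _ => integrable_mul_L2 (hDxL2 a) (hYL2 a))
  have hYsqInt : Integrable (fun ω => ∑ a, (Y a ω) ^ 2) μ :=
    integrable_finset_sum _ (fun a _ => (hYL2 a).integrable_sq)
  have hDxsqInt : Integrable (fun ω => ∑ a, (Dx a ω) ^ 2) μ :=
    integrable_finset_sum _ (fun a _ => (hDxL2 a).integrable_sq)
  have hxsqInt : Integrable g μ :=
    integrable_finset_sum _ (fun b _ => (hxL2 b).integrable_sq)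
  -- the cross term vanishes
  have cross0 : ∫ ω, ∑ a, Dx a ω * Y a ω ∂μ = 0 := by
    have hzero : ∀ M : ℕ, ∫ ω, (S M).indicator (fun ω => ∑ a, Dx a ω * Y a ω) ω ∂μ = 0 := by
      intro M
      have hindmeas : ∀ a b, StronglyMeasurable[ℱ j]
          ((S M).indicator (fun ω => Dx a ω * x ω b)) :=
        fun a b => ((hDxmeas a).mul (hxmeas b)).indicator (hSmeas M)
      have hindbdd : ∀ a b ω, ‖(S M).indicator (fun ω => Dx a ω * x ω b) ω‖ ≤ c * M := by
        intro a b ω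
        by_cases hω : ω ∈ S M
        · rw [Set.indicator_of_mem hω, Real.norm_eq_abs]
          refine abs_le_of_sq_le (by positivity) ?_
          have h1 := hbddDx M a ω hω
          have h2 := hbddx M b ω hω
          have h3 : (0:ℝ) ≤ (M:ℝ) := Nat.cast_nonneg M
          calc (Dx a ω * x ω b) ^ 2 = (Dx a ω)^2 * (x ω b)^2 := by ring
            _ ≤ (c^2 * M) * (M:ℝ) := by
                apply mul_le_mul h1 h2 (sq_nonneg _) (by positivity)
            _ = (c * M)^2 := by ring
        · rw [Set.indicator_of_notMem hω]; simp [mul_nonneg hc0 (Nat.cast_nonneg M)]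
      have htermInt : ∀ a b, Integrable
          (fun ω => (S M).indicator (fun ω => Dx a ω * x ω b) ω * Z a b ω) μ :=
        fun a b => ((hZL2 a b).integrable one_le_two).bdd_mul
          (((hindmeas a b).mono (ℱ.le j)).aestronglyMeasurable) (Filter.Eventually.of_forall (hindbdd a b))
      have hsplit : ∀ ω, (S M).indicator (fun ω => ∑ a, Dx a ω * Y a ω) ω
          = ∑ a, ∑ b, (S M).indicator (fun ω => Dx a ω * x ω b) ω * Z a b ω := by
        intro ω
        by_cases hω : ω ∈ S M
        · simp only [Set.indicator_of_mem hω]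
          refine Finset.sum_congr rfl fun a _ => ?_
          simp only [hY]
          rw [Finset.mul_sum]
          exact Finset.sum_congr rfl fun b _ => by ring
        · simp [Set.indicator_of_notMem hω]
      calc ∫ ω, (S M).indicator (fun ω => ∑ a, Dx a ω * Y a ω) ω ∂μ
          = ∫ ω, ∑ a, ∑ b, (S M).indicator (fun ω => Dx a ω * x ω b) ω * Z a b ω ∂μ :=
            integral_congr_ae (Filter.Eventually.of_forall hsplit)
        _ = ∑ a, ∑ b, ∫ ω, (S M).indicator (fun ω => Dx a ω * x ω b) ω * Z a b ω ∂μ := by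
            rw [integral_finset_sum _ (fun a _ => integrable_finset_sum _ (fun b _ => htermInt a b))]
            exact Finset.sum_congr rfl fun a _ => integral_finset_sum _ (fun b _ => htermInt a b)
        _ = 0 := by
            refine Finset.sum_eq_zero fun a _ => Finset.sum_eq_zero fun b _ => ?_
            rw [hbase _ (c * M) (hindmeas a b) (hindbdd a b) (Z a b) 0
              ((hZL2 a b).integrable one_le_two) (hZmean a b), zero_mul]
    have htend : Tendsto (fun M : ℕ => ∫ ω, (S M).indicator (fun ω => ∑ a, Dx a ω * Y a ω) ω ∂μ)
        atTop (nhds (∫ ω, ∑ a, Dx a ω * Y a ω ∂μ)) := by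
      refine tendsto_integral_of_dominated_convergence (fun ω => ‖∑ a, Dx a ω * Y a ω‖)
        (fun M => (hcrossInt.aestronglyMeasurable).indicator (hSmeas0 M)) hcrossInt.norm ?_ ?_
      · intro M; filter_upwards with ω
        exact norm_indicator_le_norm_self _ ω
      · filter_upwards with ω
        refine Tendsto.congr' ?_ tendsto_const_nhds
        filter_upwards [hmem ω] with M hM
        exact (Set.indicator_of_mem hM (fun ω => ∑ a, Dx a ω * Y a ω)).symm
    simp only [hzero] at htend
    exact tendsto_nhds_unique htend tendsto_const_nhds
  -- the quadratic term
  have quadle : ∫ ω, ∑ a, (Y a ω) ^ 2 ∂μ ≤ β * ∫ ω, g ω ∂μ := by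
    have hstep : ∀ M : ℕ, ∫ ω, (S M).indicator (fun ω => ∑ a, (Y a ω) ^ 2) ω ∂μ
        ≤ β * ∫ ω, g ω ∂μ := by
      intro M
      have hindmeas : ∀ b b', StronglyMeasurable[ℱ j]
          ((S M).indicator (fun ω => x ω b * x ω b')) :=
        fun b b' => ((hxmeas b).mul (hxmeas b')).indicator (hSmeas M)
      have hindbdd : ∀ b b' ω, ‖(S M).indicator (fun ω => x ω b * x ω b') ω‖ ≤ (M : ℝ) := by
        intro b b' ω
        by_cases hω : ω ∈ S M
        · rw [Set.indicator_of_mem hω, Real.norm_eq_abs]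
          refine abs_le_of_sq_le (Nat.cast_nonneg M) ?_
          have h1 := hbddx M b ω hω
          have h2 := hbddx M b' ω hω
          calc (x ω b * x ω b') ^ 2 = (x ω b)^2 * (x ω b')^2 := by ring
            _ ≤ (M:ℝ) * (M:ℝ) := mul_le_mul h1 h2 (sq_nonneg _) (Nat.cast_nonneg M)
            _ = ((M:ℝ))^2 := by ring
        · rw [Set.indicator_of_notMem hω]; simp
      have hWint : ∀ a b b', Integrable (fun ω => Z a b ω * Z a b' ω) μ :=
        fun a b b' => integrable_mul_L2 (hZL2 a b) (hZL2 a b')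
      have htermInt : ∀ a b b', Integrable
          (fun ω => (S M).indicator (fun ω => x ω b * x ω b') ω * (Z a b ω * Z a b' ω)) μ :=
        fun a b b' => (hWint a b b').bdd_mul
          (((hindmeas b b').mono (ℱ.le j)).aestronglyMeasurable) (Filter.Eventually.of_forall (hindbdd b b'))
      have hsplit : ∀ ω, (S M).indicator (fun ω => ∑ a, (Y a ω) ^ 2) ω
          = ∑ a, ∑ b, ∑ b',
            (S M).indicator (fun ω => x ω b * x ω b') ω * (Z a b ω * Z a b' ω) := by
        intro ω
        by_cases hω : ω ∈ S M
        · simp only [Set.indicator_of_mem hω]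
          refine Finset.sum_congr rfl fun a _ => ?_
          simp only [hY]
          rw [sq, Finset.sum_mul_sum]
          exact Finset.sum_congr rfl fun b _ => Finset.sum_congr rfl fun b' _ => by ring
        · simp [Set.indicator_of_notMem hω]
      have hindint : ∀ b b', Integrable ((S M).indicator (fun ω => x ω b * x ω b')) μ :=
        fun b b' => (integrable_mul_L2 (hxL2 b) (hxL2 b')).indicator (hSmeas0 M)
      calc ∫ ω, (S M).indicator (fun ω => ∑ a, (Y a ω) ^ 2) ω ∂μ
          = ∫ ω, ∑ a, ∑ b, ∑ b',
              (S M).indicator (fun ω => x ω b * x ω b') ω * (Z a b ω * Z a b' ω) ∂μ :=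
            integral_congr_ae (Filter.Eventually.of_forall hsplit)
        _ = ∑ a, ∑ b, ∑ b', ∫ ω,
              (S M).indicator (fun ω => x ω b * x ω b') ω * (Z a b ω * Z a b' ω) ∂μ := by
            rw [integral_finset_sum _ (fun a _ => integrable_finset_sum _ (fun b _ =>
              integrable_finset_sum _ (fun b' _ => htermInt a b b')))]
            refine Finset.sum_congr rfl fun a _ => ?_
            rw [integral_finset_sum _ (fun b _ =>
              integrable_finset_sum _ (fun b' _ => htermInt a b b'))]
            exact Finset.sum_congr rfl fun b _ =>
              integral_finset_sum _ (fun b' _ => htermInt a b b')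
        _ = ∑ a, ∑ b, ∑ b', κ a b b' *
              ∫ ω, (S M).indicator (fun ω => x ω b * x ω b') ω ∂μ := by
            refine Finset.sum_congr rfl fun a _ => Finset.sum_congr rfl fun b _ =>
              Finset.sum_congr rfl fun b' _ => ?_
            exact hbase _ (M : ℝ) (hindmeas b b') (hindbdd b b')
              (fun ω => Z a b ω * Z a b' ω) (κ a b b') (hWint a b b') (hZcov a b b')
        _ = ∫ ω, ∑ a, ∑ b, ∑ b', κ a b b' *
              (S M).indicator (fun ω => x ω b * x ω b') ω ∂μ := by
            rw [integral_finset_sum _ (fun a _ => integrable_finset_sum _ (fun b _ =>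
              integrable_finset_sum _ (fun b' _ => (hindint b b').const_mul _)))]
            refine Finset.sum_congr rfl fun a _ => ?_
            rw [integral_finset_sum _ (fun b _ =>
              integrable_finset_sum _ (fun b' _ => (hindint b b').const_mul _))]
            refine Finset.sum_congr rfl fun b _ => ?_
            rw [integral_finset_sum _ (fun b' _ => (hindint b b').const_mul _)]
            exact Finset.sum_congr rfl fun b' _ => (integral_const_mul _ _).symm
        _ ≤ β * ∫ ω, g ω ∂μ := by
            rw [← integral_const_mul]
            refine integral_mono (integrable_finset_sum _ (fun a _ =>
              integrable_finset_sum _ (fun b _ => integrable_finset_sum _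
                (fun b' _ => (hindint b b').const_mul _)))) (hxsqInt.const_mul β) ?_
            intro ω
            by_cases hω : ω ∈ S M
            · simp only [Set.indicator_of_mem hω]
              exact le_trans (hκ (x ω)) (le_refl _)
            · simp only [Set.indicator_of_notMem hω, mul_zero, Finset.sum_const_zero]
              exact mul_nonneg hβ0 (hgnonneg ω)
    have htend : Tendsto (fun M : ℕ => ∫ ω, (S M).indicator (fun ω => ∑ a, (Y a ω) ^ 2) ω ∂μ)
        atTop (nhds (∫ ω, ∑ a, (Y a ω) ^ 2 ∂μ)) := by
      refine tendsto_integral_of_dominated_convergence (fun ω => ‖∑ a, (Y a ω) ^ 2‖)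
        (fun M => (hYsqInt.aestronglyMeasurable).indicator (hSmeas0 M)) hYsqInt.norm ?_ ?_
      · intro M; filter_upwards with ω
        exact norm_indicator_le_norm_self _ ω
      · filter_upwards with ω
        refine Tendsto.congr' ?_ tendsto_const_nhds
        filter_upwards [hmem ω] with M hM
        exact (Set.indicator_of_mem hM (fun ω => ∑ a, (Y a ω) ^ 2)).symm
    exact le_of_tendsto htend (Filter.Eventually.of_forall hstep)
  -- assembly
  have hexp : ∀ ω, ∑ k, (x' ω k) ^ 2
      = ∑ a, (Dx a ω) ^ 2 + (2 * ∑ a, Dx a ω * Y a ω + ∑ a, (Y a ω) ^ 2) := by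
    intro ω
    have hx'eq : ∀ k, x' ω k = Dx k ω + Y k ω := by
      intro k; rw [hrec ω]; simp [hDx, hY]
    simp only [hx'eq]
    rw [Finset.mul_sum, ← Finset.sum_add_distrib, ← Finset.sum_add_distrib]
    exact Finset.sum_congr rfl fun k _ => by ring
  have hDxle : ∫ ω, ∑ a, (Dx a ω) ^ 2 ∂μ ≤ c ^ 2 * ∫ ω, g ω ∂μ := by
    rw [← integral_const_mul]
    refine integral_mono hDxsqInt (hxsqInt.const_mul _) ?_
    intro ω
    exact sum_sq_mulVec_le D hD (x ω)
  calc ∫ ω, ∑ k, (x' ω k) ^ 2 ∂μ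
      = ∫ ω, (∑ a, (Dx a ω) ^ 2 + (2 * ∑ a, Dx a ω * Y a ω + ∑ a, (Y a ω) ^ 2)) ∂μ :=
        integral_congr_ae (Filter.Eventually.of_forall hexp)
    _ = ∫ ω, ∑ a, (Dx a ω) ^ 2 ∂μ +
        (2 * ∫ ω, ∑ a, Dx a ω * Y a ω ∂μ + ∫ ω, ∑ a, (Y a ω) ^ 2 ∂μ) := by
        have h2 : Integrable (fun ω => 2 * ∑ a, Dx a ω * Y a ω + ∑ a, (Y a ω) ^ 2) μ :=
          (hcrossInt.const_mul 2).add hYsqInt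
        rw [integral_add hDxsqInt h2, integral_add (hcrossInt.const_mul 2) hYsqInt,
          integral_const_mul]
    _ ≤ c ^ 2 * ∫ ω, g ω ∂μ + (2 * 0 + β * ∫ ω, g ω ∂μ) := by
        rw [cross0]
        exact add_le_add hDxle (add_le_add (le_refl _) quadle)
    _ = (c ^ 2 + β) * ∫ ω, g ω ∂μ := by ring

private lemma entry_abs_le {n : ℕ} (M : Matrix (Fin n) (Fin n) ℝ) (a b : Fin n) :
    |M a b| ≤ ‖Matrix.toEuclideanCLM (𝕜 := ℝ) M‖ := by
  have h := sum_sq_mulVec_le M le_rfl (Pi.single b 1)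
  have h1 : ∑ k, ((Pi.single b 1 : Fin n → ℝ) k) ^ 2 = 1 := by
    simp [Pi.single_apply, Finset.sum_ite_eq']
  have h2 : ∀ k, M.mulVec (Pi.single b 1) k = M k b := by
    intro k; rw [Matrix.mulVec_single]; simp
  rw [h1, mul_one] at h
  have h3 : (M a b) ^ 2 ≤ ‖Matrix.toEuclideanCLM (𝕜 := ℝ) M‖ ^ 2 := by
    refine le_trans ?_ h
    have h4 := Finset.single_le_sum (f := fun k => (M.mulVec (Pi.single b 1) k) ^ 2)
      (fun k _ => sq_nonneg _) (Finset.mem_univ a)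
    simp only [h2] at h4 ⊢
    exact h4
  calc |M a b| = Real.sqrt ((M a b) ^ 2) := (Real.sqrt_sq_eq_abs _).symm
    _ ≤ Real.sqrt (‖Matrix.toEuclideanCLM (𝕜 := ℝ) M‖ ^ 2) := Real.sqrt_le_sqrt h3
    _ = _ := Real.sqrt_sq (norm_nonneg _)

private lemma diag_norm_le {n : ℕ} (d : Fin n → ℝ) {C : ℝ} (h0 : 0 ≤ C)
    (hC : ∀ k, |d k| ≤ C) :
    ‖Matrix.toEuclideanCLM (𝕜 := ℝ) (Matrix.diagonal d)‖ ≤ C := by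
  refine ContinuousLinearMap.opNorm_le_bound _ h0 ?_
  intro y
  have hy : y = (WithLp.equiv 2 (Fin n → ℝ)).symm ((WithLp.equiv 2 (Fin n → ℝ)) y) := rfl
  rw [hy, show ∀ x, Matrix.toEuclideanCLM (𝕜 := ℝ) (Matrix.diagonal d) ((WithLp.equiv 2 (Fin n → ℝ)).symm x) = (WithLp.equiv 2 (Fin n → ℝ)).symm (Matrix.toLin' (Matrix.diagonal d) x) from fun x => rfl]
  set z := (WithLp.equiv 2 (Fin n → ℝ)) y with hz
  have hnorm : ∀ w : Fin n → ℝ, ‖(WithLp.equiv 2 (Fin n → ℝ)).symm w‖ = Real.sqrt (∑ k, (w k)^2) := by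
    intro w
    have := euclid_norm_sq w
    rw [← this, Real.sqrt_sq (norm_nonneg _)]
  rw [hnorm, hnorm]
  rw [← Real.sqrt_sq h0, ← Real.sqrt_mul (by positivity)]
  apply Real.sqrt_le_sqrt
  have : ∀ k, ((Matrix.diagonal d).mulVec z k) ^ 2 = (d k)^2 * (z k)^2 := by
    intro k; rw [Matrix.mulVec_diagonal]; ring
  simp only [Matrix.toLin'_apply]
  rw [Finset.sum_congr rfl (fun k _ => this k)]
  rw [Finset.mul_sum]
  apply Finset.sum_le_sum
  intro k _
  have : (d k)^2 ≤ C^2 := by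
    rw [← sq_abs (d k)]; exact pow_le_pow_left₀ (abs_nonneg _) (hC k) 2
  nlinarith [sq_nonneg (z k)]

set_option maxHeartbeats 1000000 in
set_option synthInstance.maxHeartbeats 400000 in
/-- **Theorem 3.4(3), forward Euler.** For `R(z) = 1 + z`, the Galerkin forward
Euler–Maruyama scheme, written in the orthonormal eigenbasis of `-A_h` (eigenvalues
`0 < λ_{h,1} ≤ … ≤ λ_{h,N_h}`, monotone): deterministic part
`D = (I + Δt A_h) + Δt P_h F = diag(1 - Δt λ_{h,k}) + Δt Fm` with `‖Fm‖ ≤ ‖F‖_{L(H)}`,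
stochastic part `E^j = P_h G(·)ΔL^j = G(ΔL^j)` with `‖G(u)‖ ≤ ‖G‖‖u‖`, driven by Lévy
increments with covariance `Δt Σ_k μ_k f_k ⊗ f_k`, `Tr(Q) = Σ_k μ_k`. It is asymptotically
mean-square stable if
`(max{|1 - Δt λ_{h,1}|, |1 - Δt λ_{h,N_h}|} + Δt ‖F‖)² + Δt Tr(Q) ‖G‖² < 1`. -/
theorem stmt10
    {Ω U : Type*} {m0 : MeasurableSpace Ω} (μ : Measure Ω) [IsProbabilityMeasure μ]
    [NormedAddCommGroup U] [InnerProductSpace ℝ U] [CompleteSpace U]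
    (ℱ : Filtration ℕ m0) (N : ℕ) (Δt : ℝ) (hΔt : 0 < Δt)
    (f : ℕ → U) (hf : Orthonormal ℝ f)
    (muQ : ℕ → ℝ) (hmu : ∀ k, 0 ≤ muQ k) (hsum : Summable muQ)
    (ΔL : ℕ → Ω → U)
    (hmeasL : ∀ j, StronglyMeasurable[ℱ (j + 1)] (ΔL j))
    (hL2L : ∀ j, MemLp (ΔL j) 2 μ)
    (hmean : ∀ j (u : U), μ[(fun ω => ⟪ΔL j ω, u⟫) | ℱ j] =ᵐ[μ] 0)
    (hcondcov : ∀ j (u u' : U),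
      μ[(fun ω => ⟪ΔL j ω, u⟫ * ⟪ΔL j ω, u'⟫) | ℱ j]
        =ᵐ[μ] fun _ => ∫ ω, ⟪ΔL j ω, u⟫ * ⟪ΔL j ω, u'⟫ ∂μ)
    (hcov : ∀ j (u u' : U), ∫ ω, ⟪ΔL j ω, u⟫ * ⟪ΔL j ω, u'⟫ ∂μ
      = Δt * ∑' k, muQ k * (⟪f k, u⟫ * ⟪f k, u'⟫))
    (hspan : ∀ j ω, ΔL j ω ∈ (Submodule.span ℝ (Set.range f)).topologicalClosure)
    -- eigenvalues of `-A_h`, non-decreasing, smallest `lamh 0`, largest `lamh (Fin.last N)`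
    (lamh : Fin (N + 1) → ℝ) (hlampos : ∀ k, 0 < lamh k) (hlammono : Monotone lamh)
    (Fm : Matrix (Fin (N + 1)) (Fin (N + 1)) ℝ) (nF : ℝ) (hnF0 : 0 ≤ nF)
    (hFm : ‖Matrix.toEuclideanCLM (𝕜 := ℝ) Fm‖ ≤ nF)
    (G : U →ₗ[ℝ] Matrix (Fin (N + 1)) (Fin (N + 1)) ℝ) (gn : ℝ) (hgn0 : 0 ≤ gn)
    (hG : ∀ u : U, ‖Matrix.toEuclideanCLM (𝕜 := ℝ) (G u)‖ ≤ gn * ‖u‖)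
    (hcond : (max |1 - Δt * lamh 0| |1 - Δt * lamh (Fin.last N)| + Δt * nF) ^ 2
        + Δt * (∑' k, muQ k) * gn ^ 2 < 1) :
    AsympMeanSquareStable μ ℱ
      (Matrix.diagonal (fun k => 1 - Δt * lamh k) + Δt • Fm)
      (fun j ω => G (ΔL j ω)) := by
  classical
  set Dm : Matrix (Fin (N+1)) (Fin (N+1)) ℝ :=
    Matrix.diagonal (fun k => 1 - Δt * lamh k) + Δt • Fm with hDm
  set c : ℝ := max |1 - Δt * lamh 0| |1 - Δt * lamh (Fin.last N)| + Δt * nF with hc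
  have hc0 : 0 ≤ c := add_nonneg (le_trans (abs_nonneg _) (le_max_left _ _)) (by positivity)
  have hDnorm : ‖Matrix.toEuclideanCLM (𝕜 := ℝ) Dm‖ ≤ c := by
    rw [hDm, map_add]
    refine le_trans (norm_add_le _ _) (add_le_add ?_ ?_)
    · refine diag_norm_le _ (le_trans (abs_nonneg _) (le_max_left _ _)) ?_
      intro k
      rw [max_comm]
      refine abs_le_max_abs_abs ?_ ?_
      · have h1 := hlammono (Fin.le_last k)
        nlinarith [mul_le_mul_of_nonneg_left h1 hΔt.le]
      · have h1 := hlammono (Fin.zero_le k)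
        nlinarith [mul_le_mul_of_nonneg_left h1 hΔt.le]
    · rw [_root_.map_smul]
      refine le_trans (ContinuousLinearMap.opNorm_smul_le Δt (Matrix.toEuclideanCLM (𝕜 := ℝ) Fm)) ?_
      rw [Real.norm_eq_abs, abs_of_pos hΔt]
      exact mul_le_mul_of_nonneg_left hFm hΔt.le
  -- Riesz representatives of the entries of G
  have hGlin : ∀ (a b : Fin (N+1)), ∃ v : U, ∀ u : U, ⟪v, u⟫ = G u a b := by
    intro a b
    have hbound : ∀ u : U, ‖G u a b‖ ≤ gn * ‖u‖ := fun u =>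
      le_trans (by rw [Real.norm_eq_abs]; exact entry_abs_le (G u) a b) (hG u)
    let φlin : U →ₗ[ℝ] ℝ :=
      { toFun := fun u => G u a b
        map_add' := by intro u w; simp [map_add]
        map_smul' := by intro r u; simp [_root_.map_smul] }
    let φ : U →L[ℝ] ℝ := φlin.mkContinuous gn hbound
    refine ⟨(InnerProductSpace.toDual ℝ U).symm φ, fun u => ?_⟩
    exact InnerProductSpace.toDual_symm_apply
  choose v hv using hGlin
  have hvG : ∀ (j : ℕ) (ω : Ω) (a b : Fin (N+1)), G (ΔL j ω) a b = ⟪ΔL j ω, v a b⟫ := by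
    intro j ω a b; rw [real_inner_comm, hv]
  -- summability facts
  have htsum0 : (0:ℝ) ≤ ∑' k, muQ k := tsum_nonneg hmu
  have hmuB : ∀ k, muQ k ≤ ∑' i, muQ i := fun k => Summable.le_tsum hsum k (fun i _ => hmu i)
  have hsummable : ∀ u u' : U, Summable (fun k => muQ k * (⟪f k, u⟫ * ⟪f k, u'⟫)) := by
    intro u u'
    have hb : Summable (fun k => (∑' i, muQ i) * (‖⟪f k, u⟫‖ ^ 2 + ‖⟪f k, u'⟫‖ ^ 2)) :=
      ((hf.inner_products_summable (x := u)).add (hf.inner_products_summable (x := u'))).mul_left _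
    refine Summable.of_norm_bounded hb ?_
    intro k
    rw [norm_mul, Real.norm_eq_abs (muQ k), abs_of_nonneg (hmu k)]
    refine mul_le_mul (hmuB k) ?_ (norm_nonneg _) htsum0
    simp only [Real.norm_eq_abs, abs_mul, sq_abs]
    rw [← sq_abs (⟪f k, u⟫), ← sq_abs (⟪f k, u'⟫)]
    nlinarith [sq_nonneg (|⟪f k, u⟫| - |⟪f k, u'⟫|), abs_nonneg (⟪f k, u⟫), abs_nonneg (⟪f k, u'⟫)]
  set β : ℝ := Δt * (∑' k, muQ k) * gn ^ 2 with hβ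
  have hβ0 : 0 ≤ β := by positivity
  set α : ℝ := c ^ 2 + β with hα
  have hα0 : 0 ≤ α := add_nonneg (sq_nonneg _) hβ0
  have hα1 : α < 1 := hcond
  -- the covariance coefficients
  set κ : Fin (N+1) → Fin (N+1) → Fin (N+1) → ℝ :=
    fun a b b' => Δt * ∑' k, muQ k * (⟪f k, v a b⟫ * ⟪f k, v a b'⟫) with hκdef
  have hκ : ∀ y : Fin (N+1) → ℝ,
      ∑ a, ∑ b, ∑ b', κ a b b' * (y b * y b') ≤ β * ∑ b, (y b) ^ 2 := by
    intro y
    have hGfk : ∀ k : ℕ, ‖Matrix.toEuclideanCLM (𝕜 := ℝ) (G (f k))‖ ≤ gn := by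
      intro k
      have h1 := hG (f k)
      rwa [hf.1 k, mul_one] at h1
    set T : ℕ → Fin (N+1) → Fin (N+1) → Fin (N+1) → ℝ :=
      fun k a b b' => muQ k * (⟪f k, v a b⟫ * ⟪f k, v a b'⟫) * (y b * y b') with hT
    have hTsummable : ∀ a b b', Summable (fun k => T k a b b') :=
      fun a b b' => (hsummable (v a b) (v a b')).mul_right _
    have step1 : ∑ a, ∑ b, ∑ b', κ a b b' * (y b * y b')
        = Δt * ∑' k, ∑ a, ∑ b, ∑ b', T k a b b' := by
      rw [Summable.tsum_finsetSum (fun a (_ : a ∈ Finset.univ) =>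
        summable_sum (fun b _ => summable_sum (fun b' _ => hTsummable a b b'))), Finset.mul_sum]
      refine Finset.sum_congr rfl fun a _ => ?_
      rw [Summable.tsum_finsetSum (fun b (_ : b ∈ Finset.univ) =>
        summable_sum (fun b' _ => hTsummable a b b')), Finset.mul_sum]
      refine Finset.sum_congr rfl fun b _ => ?_
      rw [Summable.tsum_finsetSum (fun b' (_ : b' ∈ Finset.univ) => hTsummable a b b'), Finset.mul_sum]
      refine Finset.sum_congr rfl fun b' _ => ?_
      rw [mul_assoc, ← tsum_mul_right]
    have step2 : ∀ k, ∑ a, ∑ b, ∑ b', T k a b b'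
        = muQ k * ∑ a, ((G (f k)).mulVec y a) ^ 2 := by
      intro k
      rw [Finset.mul_sum]
      refine Finset.sum_congr rfl fun a _ => ?_
      have hw : (G (f k)).mulVec y a = ∑ b, ⟪f k, v a b⟫ * y b := by
        simp only [Matrix.mulVec, dotProduct]
        refine Finset.sum_congr rfl fun b _ => ?_
        rw [real_inner_comm, hv]
      rw [hw, sq, Finset.sum_mul_sum, Finset.mul_sum]
      refine Finset.sum_congr rfl fun b _ => ?_
      rw [Finset.mul_sum]
      refine Finset.sum_congr rfl fun b' _ => ?_
      simp only [hT]; ring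
    rw [step1]
    have h1 : Summable (fun k => muQ k * ∑ a, ((G (f k)).mulVec y a) ^ 2) := by
      refine Summable.of_nonneg_of_le (fun k => ?_) (fun k => ?_) (hsum.mul_right (gn ^ 2 * ∑ b, (y b) ^ 2))
      · exact mul_nonneg (hmu k) (Finset.sum_nonneg fun a _ => sq_nonneg _)
      · exact mul_le_mul_of_nonneg_left (sum_sq_mulVec_le _ (hGfk k) y) (hmu k)
    have hsTa : Summable (fun k => ∑ a, ∑ b, ∑ b', T k a b b') :=
      (summable_congr step2).mpr h1
    have hle : ∑' k, ∑ a, ∑ b, ∑ b', T k a b b'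
        ≤ ∑' k, muQ k * (gn ^ 2 * ∑ b, (y b) ^ 2) := by
      refine Summable.tsum_le_tsum (fun k => ?_) hsTa (hsum.mul_right _)
      rw [step2 k]
      exact mul_le_mul_of_nonneg_left (sum_sq_mulVec_le _ (hGfk k) y) (hmu k)
    calc Δt * ∑' k, ∑ a, ∑ b, ∑ b', T k a b b'
        ≤ Δt * ∑' k, muQ k * (gn ^ 2 * ∑ b, (y b) ^ 2) :=
          mul_le_mul_of_nonneg_left hle hΔt.le
      _ = β * ∑ b, (y b) ^ 2 := by
          rw [tsum_mul_right, hβ]; ring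
  -- the one-step moment inequality for any solution
  have key : ∀ X : ℕ → Ω → Fin (N+1) → ℝ, IsSolution μ ℱ Dm (fun j ω => G (ΔL j ω)) X →
      ∀ j, secondMoment μ X (j + 1) ≤ α * secondMoment μ X j := by
    intro X hX j
    obtain ⟨hrec, hmeas0, hL2X⟩ := hX
    have hXmeas : ∀ j k, StronglyMeasurable[ℱ j] (fun ω => X j ω k) := by
      intro j
      induction j with
      | zero => exact hmeas0
      | succ j ih =>
        intro k
        have heq : (fun ω => X (j+1) ω k)
            = fun ω => ∑ b, (Dm k b + ⟪ΔL j ω, v k b⟫) * X j ω b := by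
          funext ω
          rw [hrec j ω]
          simp only [Matrix.mulVec, dotProduct, Matrix.add_apply]
          exact Finset.sum_congr rfl fun b _ => by rw [hvG j ω k b]
        rw [heq]
        refine Finset.stronglyMeasurable_fun_sum _ fun b _ => StronglyMeasurable.mul ?_ ?_
        · exact (stronglyMeasurable_const.add
            ((hmeasL j).inner stronglyMeasurable_const))
        · exact (ih b).mono (ℱ.mono (Nat.le_succ j))
    have hZrec : ∀ ω, X (j+1) ω = Dm.mulVec (X j ω)
        + (fun a => ∑ b, ⟪ΔL j ω, v a b⟫ * X j ω b) := by
      intro ω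
      rw [hrec j ω, Matrix.add_mulVec]
      congr 1
      funext a
      simp only [Matrix.mulVec, dotProduct]
      exact Finset.sum_congr rfl fun b _ => by rw [hvG j ω a b]
    exact moment_step μ ℱ j (X j) (X (j+1)) Dm hc0 hDnorm
      (fun a b ω => ⟪ΔL j ω, v a b⟫)
      (fun a b => (hL2L j).inner_const (v a b))
      (fun a b => hmean j (v a b))
      κ
      (fun a b b' => ((hcondcov j (v a b) (v a b')).trans
        (by rw [hcov j (v a b) (v a b')])))
      hβ0 hκ
      (fun b => hXmeas j b)
      (fun b => hL2X j b)
      (fun b => hL2X (j+1) b)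
      hZrec
  -- geometric decay
  have hmom : ∀ X : ℕ → Ω → Fin (N+1) → ℝ, IsSolution μ ℱ Dm (fun j ω => G (ΔL j ω)) X →
      ∀ j, secondMoment μ X j ≤ α ^ j * secondMoment μ X 0 := by
    intro X hX j
    induction j with
    | zero => simp
    | succ j ih =>
      calc secondMoment μ X (j+1) ≤ α * secondMoment μ X j := key X hX j
        _ ≤ α * (α ^ j * secondMoment μ X 0) := mul_le_mul_of_nonneg_left ih hα0
        _ = α ^ (j+1) * secondMoment μ X 0 := by ring
  have hnonneg : ∀ X : ℕ → Ω → Fin (N+1) → ℝ, ∀ j, 0 ≤ secondMoment μ X j := by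
    intro X j
    exact integral_nonneg fun ω => Finset.sum_nonneg fun k _ => sq_nonneg _
  constructor
  · intro ε hε
    refine ⟨ε, hε, fun X hX h0 j => ?_⟩
    calc secondMoment μ X j ≤ α ^ j * secondMoment μ X 0 := hmom X hX j
      _ ≤ 1 * secondMoment μ X 0 :=
          mul_le_mul_of_nonneg_right (pow_le_one₀ hα0 hα1.le) (hnonneg X 0)
      _ = secondMoment μ X 0 := one_mul _
      _ < ε := h0
  · refine ⟨1, one_pos, fun X hX _ => ?_⟩
    refine squeeze_zero (fun j => hnonneg X j) (fun j => hmom X hX j) ?_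
    have h2 := (tendsto_pow_atTop_nhds_zero_of_lt_one hα0 hα1).mul_const (secondMoment μ X 0)
    simpa using h2

end
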